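/- Let θ > 0, let φ ∈ ℝ^N with ‖φ‖₂ = 1, and let C be the real symmetric 2N×2N matrix with N×N blocks [[I_N + θφφᵀ, θφφᵀ],[θφφᵀ, I_N + θφφᵀ]] (the rank-one spiked impropriety model). Then C is positive definite, Γ(C) = (θ/(1+θ)) · [[0, φφᵀ],[φφᵀ, 0]], and the spectrum of Γ(C) consists of the simple eigenvalues θ/(1+θ) and −θ/(1+θ) together with the eigenvalue 0 of multiplicity 2N−2; in particular there is exactly one nonzero population impropriety coefficient, equal to θ/(1+θ). -/

import Mathlib

open Matrix Polynomial

set_option maxHeartbeats 800000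
set_option linter.unusedSectionVars false

section Helpers
variable {n : Type*} [Fintype n] [DecidableEq n]

private lemma vmv_mul (a b c d : n → ℝ) :
    vecMulVec a b * vecMulVec c d = (b ⬝ᵥ c) • vecMulVec a d := by
  ext i j
  simp [mul_apply, vecMulVec_apply, dotProduct, smul_eq_mul, Finset.mul_sum, Finset.sum_mul]
  congr 1; ext k; ring

omit [Fintype n] [DecidableEq n] in
private lemma smul_vmv (a : ℝ) (u v : n → ℝ) : a • vecMulVec u v = vecMulVec (a • u) v := by
  ext i j; simp [vecMulVec_apply]; ring

private lemma vmv_mulVec (v x : n → ℝ) : (vecMulVec v v) *ᵥ x = (v ⬝ᵥ x) • v := by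
  ext i
  simp only [mulVec, vecMulVec_apply, dotProduct, Pi.smul_apply, smul_eq_mul, Finset.sum_mul]
  congr 1; ext k; ring

private lemma psd_vmv (v : n → ℝ) : (vecMulVec v v).PosSemidef := by
  simpa using posSemidef_vecMulVec_self_star v

private lemma psd_smul {M : Matrix n n ℝ} (h : M.PosSemidef) {a : ℝ} (ha : 0 ≤ a) :
    (a • M).PosSemidef := by
  exact h.smul ha

private lemma mul_one_add_smul {A : Matrix n n ℝ} (hA : A * A = (2:ℝ) • A) (a b : ℝ) :
    (1 + a • A) * (1 + b • A) = 1 + (a + b + 2*a*b) • A := by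
  simp only [mul_add, add_mul, one_mul, mul_one, smul_mul_assoc, mul_smul_comm, smul_smul, hA]
  module

private lemma det_one_add_smul_vmv (a : ℝ) (v : n → ℝ) :
    det (1 + a • vecMulVec v v) = 1 + a * (v ⬝ᵥ v) := by
  rw [smul_vmv, vecMulVec_eq Unit, det_one_add_replicateCol_mul_replicateRow]
  simp [dotProduct, Finset.mul_sum]
  congr 1; ext k; ring

private lemma eval_charpoly' (M : Matrix n n ℝ) (x : ℝ) :
    M.charpoly.eval x = det (x • (1 : Matrix n n ℝ) - M) := by
  rw [show M.charpoly.eval x = (Polynomial.evalRingHom x) (M.charpoly) from rfl,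
    Matrix.charpoly, RingHom.map_det]
  congr 1
  ext i j
  rw [RingHom.mapMatrix_apply, Matrix.map_apply]
  by_cases h : i = j
  · subst h; simp [charmatrix_apply_eq, one_apply]
  · simp [charmatrix_apply_ne _ _ _ h, one_apply, h]

end Helpers

/-- The proper part `Ċ` of a real `2N × 2N` matrix `C` with blocks `[[A, B],[B′, D]]`:
`Ċ = (1/2)·[[A+D, B−B′],[B′−B, A+D]]`. -/
noncomputable def dotPart {N : ℕ} (C : Matrix (Fin N ⊕ Fin N) (Fin N ⊕ Fin N) ℝ) :
    Matrix (Fin N ⊕ Fin N) (Fin N ⊕ Fin N) ℝ :=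
  (1/2 : ℝ) • Matrix.fromBlocks (C.toBlocks₁₁ + C.toBlocks₂₂) (C.toBlocks₁₂ - C.toBlocks₂₁)
    (C.toBlocks₂₁ - C.toBlocks₁₂) (C.toBlocks₁₁ + C.toBlocks₂₂)

/-- The improper part `C̈ = C − Ċ`. -/
noncomputable def ddotPart {N : ℕ} (C : Matrix (Fin N ⊕ Fin N) (Fin N ⊕ Fin N) ℝ) :
    Matrix (Fin N ⊕ Fin N) (Fin N ⊕ Fin N) ℝ :=
  C - dotPart C

open scoped ComplexOrder in
/-- The positive semidefinite square root of a positive semidefinite matrix, as defined in the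
older Mathlib (`Matrix.PosSemidef.sqrt`, since removed). -/
noncomputable def Matrix.PosSemidef.sqrt {n 𝕜 : Type*} [Fintype n] [RCLike 𝕜] [DecidableEq n]
    {A : Matrix n n 𝕜} (hA : A.PosSemidef) : Matrix n n 𝕜 :=
  hA.1.eigenvectorUnitary.1 * diagonal ((↑) ∘ (√·) ∘ hA.1.eigenvalues) *
  (star hA.1.eigenvectorUnitary : Matrix n n 𝕜)

/-- `Γ(C) = Ċ^{-1/2} C̈ Ċ^{-1/2}`, where `Ċ^{1/2}` is the (unique) positive semidefinite
(hence, as `Ċ` is positive definite, the unique symmetric positive definite) square root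
of `Ċ`, given a proof `h` that `Ċ` is positive definite. -/
noncomputable def Gamma {N : ℕ} (C : Matrix (Fin N ⊕ Fin N) (Fin N ⊕ Fin N) ℝ)
    (h : (dotPart C).PosDef) : Matrix (Fin N ⊕ Fin N) (Fin N ⊕ Fin N) ℝ :=
  (Matrix.PosSemidef.sqrt h.posSemidef)⁻¹ * ddotPart C * (Matrix.PosSemidef.sqrt h.posSemidef)⁻¹

open scoped MatrixOrder in
private lemma psd_sqrt_eq {n : Type*} [Fintype n] [DecidableEq n] {A S : Matrix n n ℝ}
    (hA : A.PosSemidef) (hS : S.PosSemidef) (h : S ^ 2 = A) :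
    Matrix.PosSemidef.sqrt hA = S := by
  have h1 : Matrix.PosSemidef.sqrt hA = hA.1.cfc Real.sqrt := by
    simp [Matrix.PosSemidef.sqrt, Matrix.IsHermitian.cfc]
  rw [h1, ← hA.1.cfc_eq, ← cfcₙ_eq_cfc (hf0 := Real.sqrt_zero), ← CFC.sqrt_eq_real_sqrt A hA.nonneg]
  exact CFC.sqrt_unique (by rw [← h, pow_two]) hS.nonneg

theorem statement19 (N : ℕ) (hN : 1 ≤ N) (θ : ℝ) (hθ : 0 < θ)
    (φ : Fin N → ℝ) (hφ : ∑ i, φ i ^ 2 = 1)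
    (hd : (dotPart (Matrix.fromBlocks (1 + θ • Matrix.vecMulVec φ φ) (θ • Matrix.vecMulVec φ φ)
        (θ • Matrix.vecMulVec φ φ) (1 + θ • Matrix.vecMulVec φ φ))).PosDef) :
    (Matrix.fromBlocks (1 + θ • Matrix.vecMulVec φ φ) (θ • Matrix.vecMulVec φ φ)
        (θ • Matrix.vecMulVec φ φ) (1 + θ • Matrix.vecMulVec φ φ)).PosDef ∧
    Gamma (Matrix.fromBlocks (1 + θ • Matrix.vecMulVec φ φ) (θ • Matrix.vecMulVec φ φ)
        (θ • Matrix.vecMulVec φ φ) (1 + θ • Matrix.vecMulVec φ φ)) hd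
      = (θ / (1 + θ)) • Matrix.fromBlocks 0 (Matrix.vecMulVec φ φ) (Matrix.vecMulVec φ φ) 0 ∧
    (Gamma (Matrix.fromBlocks (1 + θ • Matrix.vecMulVec φ φ) (θ • Matrix.vecMulVec φ φ)
        (θ • Matrix.vecMulVec φ φ) (1 + θ • Matrix.vecMulVec φ φ)) hd).charpoly
      = X ^ (2 * N - 2) * (X - C (θ / (1 + θ))) * (X + C (θ / (1 + θ))) := by
  -- notation
  set w : Fin N ⊕ Fin N → ℝ := Sum.elim φ φ with hw
  set w' : Fin N ⊕ Fin N → ℝ := Sum.elim φ (fun i => -φ i) with hw'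
  set V : Matrix (Fin N ⊕ Fin N) (Fin N ⊕ Fin N) ℝ := vecMulVec w w with hV
  set W : Matrix (Fin N ⊕ Fin N) (Fin N ⊕ Fin N) ℝ := vecMulVec w' w' with hW
  set P : Matrix (Fin N) (Fin N) ℝ := vecMulVec φ φ with hP
  set Cm : Matrix (Fin N ⊕ Fin N) (Fin N ⊕ Fin N) ℝ :=
    Matrix.fromBlocks (1 + θ • P) (θ • P) (θ • P) (1 + θ • P) with hCm
  -- dot products
  have dww : w ⬝ᵥ w = 2 := by
    simp [hw, dotProduct, Fintype.sum_sum_type, ← sq, hφ]; norm_num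
  have dww' : w ⬝ᵥ w' = 0 := by
    simp [hw, hw', dotProduct, Fintype.sum_sum_type]
  have dw'w : w' ⬝ᵥ w = 0 := by
    simp [hw, hw', dotProduct, Fintype.sum_sum_type, mul_comm]
  have dw'w' : w' ⬝ᵥ w' = 2 := by
    simp [hw', dotProduct, Fintype.sum_sum_type, ← sq, hφ]; norm_num
  -- products
  have hVV : V * V = (2:ℝ) • V := by rw [hV, vmv_mul, dww]
  have hWW : W * W = (2:ℝ) • W := by rw [hW, vmv_mul, dw'w']
  have hVW : V * W = 0 := by rw [hV, hW, vmv_mul, dww']; simp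
  have hWV : W * V = 0 := by rw [hV, hW, vmv_mul, dw'w]; simp
  have hSum : (V + W) * (V + W) = (2:ℝ) • (V + W) := by
    rw [add_mul, mul_add, mul_add, hVV, hWW, hVW, hWV]; module
  have hDiffSum : (V - W) * (V + W) = (2:ℝ) • (V - W) := by
    rw [sub_mul, mul_add, mul_add, hVV, hWW, hVW, hWV]; module
  have hSumDiff : (V + W) * (V - W) = (2:ℝ) • (V - W) := by
    rw [add_mul, mul_sub, mul_sub, hVV, hWW, hVW, hWV]; module
  -- block identities
  have E1 : Cm = 1 + θ • V := by
    rw [hCm, hV, hw]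
    ext (i|i) (j|j) <;> simp [fromBlocks, vecMulVec_apply, one_apply, hP]
  have E2 : Matrix.fromBlocks 0 P P 0 = (1/2 : ℝ) • (V - W) := by
    rw [hV, hW, hw, hw']
    ext (i|i) (j|j) <;> simp [fromBlocks, vecMulVec_apply, one_apply, hP] <;> ring
  have Edot : dotPart Cm = 1 + (θ/2) • (V + W) := by
    rw [hCm, hV, hW, hw, hw']
    unfold dotPart
    simp only [toBlocks_fromBlocks₁₁, toBlocks_fromBlocks₁₂, toBlocks_fromBlocks₂₁,
      toBlocks_fromBlocks₂₂, sub_self]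
    ext (i|i) (j|j) <;> simp [fromBlocks, vecMulVec_apply, one_apply, hP] <;> ring
  -- Part 1: PosDef
  have part1 : Cm.PosDef := by
    rw [E1]
    exact Matrix.PosDef.add_posSemidef Matrix.PosDef.one (psd_smul (psd_vmv w) hθ.le)
  -- square root facts
  have h1θ : (0:ℝ) < 1 + θ := by linarith
  set s : ℝ := Real.sqrt (1 + θ) with hs
  have hs2 : s ^ 2 = 1 + θ := Real.sq_sqrt h1θ.le
  have hs0 : 0 < s := Real.sqrt_pos.mpr h1θ
  have hs1 : 1 ≤ s := by nlinarith
  set a : ℝ := (s - 1)/2 with ha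
  set c : ℝ := (1/s - 1)/2 with hc
  have ha0 : 0 ≤ a := by rw [ha]; linarith
  set S : Matrix (Fin N ⊕ Fin N) (Fin N ⊕ Fin N) ℝ := 1 + a • (V + W) with hS
  set T : Matrix (Fin N ⊕ Fin N) (Fin N ⊕ Fin N) ℝ := 1 + c • (V + W) with hT
  have hSsq : S ^ 2 = dotPart Cm := by
    rw [Edot, hS, pow_two, mul_one_add_smul hSum]
    congr 1
    have hθs : θ = s^2 - 1 := by linarith [hs2]
    rw [ha, hθs]; ring
  have hSpsd : S.PosSemidef := by
    rw [hS, smul_add]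
    exact Matrix.PosSemidef.add Matrix.PosSemidef.one
      (by rw [← smul_add]; exact psd_smul ((psd_vmv w).add (psd_vmv w')) ha0)
  have hsqrt : hd.posSemidef.sqrt = S := psd_sqrt_eq hd.posSemidef hSpsd hSsq
  have hST : S * T = 1 := by
    rw [hS, hT, mul_one_add_smul hSum]
    have : a + c + 2*a*c = 0 := by
      rw [ha, hc]; field_simp; ring
    rw [this]; simp
  have hinv : (hd.posSemidef.sqrt)⁻¹ = T := by
    rw [hsqrt]; exact Matrix.inv_eq_right_inv hST
  -- ddot part
  have hddot : ddotPart Cm = (θ/2) • (V - W) := by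
    have h0 : ddotPart Cm = Cm - dotPart Cm := rfl
    rw [h0, Edot, E1]
    module
  -- Gamma computation
  have hTD' : T * (V - W) = (1 + 2*c) • (V - W) := by
    rw [hT, add_mul, one_mul, smul_mul_assoc, hSumDiff]
    module
  have hDT' : (V - W) * T = (1 + 2*c) • (V - W) := by
    rw [hT, mul_add, mul_one, mul_smul_comm, hDiffSum]
    module
  have hGam : T * ((θ/2) • (V - W)) * T = ((θ/2) * ((1+2*c) * (1+2*c))) • (V - W) := by
    rw [mul_smul_comm, smul_mul_assoc, hTD', smul_mul_assoc, hDT', smul_smul, smul_smul]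
    ring_nf
  have part2 : Gamma Cm hd = (θ / (1 + θ)) • Matrix.fromBlocks 0 P P 0 := by
    unfold Gamma
    rw [hinv, hddot, hGam, E2, smul_smul]
    congr 1
    have hss : s * s = 1 + θ := by nlinarith [hs2]
    have h12c : 1 + 2*c = 1/s := by rw [hc]; ring
    rw [h12c, ← hss]
    field_simp
  refine ⟨part1, part2, ?_⟩
  -- charpoly
  rw [part2, E2, smul_smul]
  set lam : ℝ := θ / (1 + θ) with hlam
  set G : Matrix (Fin N ⊕ Fin N) (Fin N ⊕ Fin N) ℝ := (lam * (1/2)) • (V - W) with hG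
  apply Polynomial.eq_of_infinite_eval_eq
  apply Set.Infinite.mono (s := {x : ℝ | x ≠ 0})
  swap
  · exact Set.Finite.infinite_compl (Set.finite_singleton 0)
  intro x hx
  have hx : x ≠ 0 := hx
  simp only [Set.mem_setOf_eq]
  rw [eval_charpoly']
  have hxp : x * (-(lam/(2*x))) = -(lam * (1/2)) := by field_simp
  have hxq : x * (lam/(2*x)) = lam * (1/2) := by field_simp
  have key : x • (1 : Matrix (Fin N ⊕ Fin N) (Fin N ⊕ Fin N) ℝ) - G
      = x • ((1 + (-(lam/(2*x))) • V + (lam/(2*x)) • W)) := by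
    rw [hG, smul_add, smul_add, smul_smul, smul_smul, hxp, hxq, smul_sub]
    module
  have h0 : ((-(lam/(2*x))) • V) * ((lam/(2*x)) • W) = 0 := by
    rw [smul_mul_assoc, mul_smul_comm, hVW, smul_zero, smul_zero]
  have hsplit : (1 : Matrix (Fin N ⊕ Fin N) (Fin N ⊕ Fin N) ℝ)
      + (-(lam/(2*x))) • V + (lam/(2*x)) • W
      = (1 + (-(lam/(2*x))) • V) * (1 + (lam/(2*x)) • W) := by
    rw [mul_add, mul_one, add_mul, one_mul, h0, add_zero]
  rw [key, det_smul, hsplit, det_mul, hV, hW, det_one_add_smul_vmv, det_one_add_smul_vmv,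
    dww, dw'w']
  have hcard : Fintype.card (Fin N ⊕ Fin N) = (2*N - 2) + 2 := by
    rw [Fintype.card_sum, Fintype.card_fin]; omega
  rw [hcard]
  simp only [smul_eq_mul, eval_mul, eval_pow, eval_X, eval_add, eval_sub, eval_C]
  rw [pow_add]
  field_simp
  ring
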